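/- If a sequence of analytic functions f_n converges to f locally uniformly on the disk D(0,R₁) and g_n converges to g locally uniformly on D(0,R₂), then the Hadamard products f_n * g_n (defined by multiplying Taylor coefficients at 0 termwise) converge to f * g locally uniformly on D(0, R₁R₂). -/

import Mathlib

open Metric Set Filter

noncomputable def coeff (f : ℂ → ℂ) (k : ℕ) : ℂ := iteratedDeriv k f 0 / (k.factorial : ℂ)

noncomputable def hadamard (f g : ℂ → ℂ) : ℂ → ℂ := fun z => ∑' k : ℕ, coeff f k * coeff g k * z ^ k

def Pt (x : ℂ) (f : ℂ → ℂ) : ℂ → ℂ := fun z => f (x * z)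

def A0 : Set (ℂ → ℂ) := {f | AnalyticOnNhd ℂ f (ball (0:ℂ) 1) ∧ f 0 = 1}

def cm (V : Set (ℂ → ℂ)) : Set (ℂ → ℂ) := {h | ∃ f ∈ V, ∃ x : ℂ, ‖x‖ ≤ 1 ∧ h = Pt x f}

def dual (V : Set (ℂ → ℂ)) : Set (ℂ → ℂ) :=
  {g ∈ A0 | ∀ f ∈ V, ∀ z ∈ ball (0:ℂ) 1, hadamard f g z ≠ 0}

def eligible (g : ℂ → ℂ) : Prop := ∃ R > 1, AnalyticOnNhd ℂ g (ball (0:ℂ) R)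

def VT (V : Set (ℂ → ℂ)) : Set (ℂ → ℂ) :=
  {g | eligible g ∧ g 0 = 1 ∧ ∀ f ∈ V, hadamard f g 1 ≠ 0}

def perp (U : Set (ℂ → ℂ)) : Set (ℂ → ℂ) :=
  {h ∈ A0 | ∀ g ∈ U, hadamard g h 1 ≠ 0}

def lamSet (g : ℂ → ℂ) (V : Set (ℂ → ℂ)) : Set ℂ := (fun f => hadamard f g 1) '' V

def S (R : ℝ) : Set (Set ℂ) := {K | K ⊆ ball (0:ℂ) R ∧ IsCompact K}

noncomputable def closLU (R : ℝ) (U : Set (ℂ → ℂ)) : Set (ℂ → ℂ) :=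
  (UniformOnFun.toFun (S R)) '' closure ((UniformOnFun.ofFun (S R)) '' U)

lemma coeff_eq_cauchy {h : ℂ → ℂ} {r : NNReal} (hr : 0 < r)
    (hd : DifferentiableOn ℂ h (closedBall (0:ℂ) r)) (k : ℕ) :
    coeff h k = cauchyPowerSeries h 0 r k (fun _ => 1) := by
  have H := hd.hasFPowerSeriesOnBall hr
  have h1 := H.factorial_smul (y := (1:ℂ)) k
  unfold coeff
  rw [iteratedDeriv_eq_iteratedFDeriv, ← h1, nsmul_eq_mul]
  field_simp
  exact mul_div_cancel_left₀ _ (by exact_mod_cast k.factorial_ne_zero)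

lemma coeff_bound {h : ℂ → ℂ} {r M : ℝ} (hr : 0 < r)
    (hd : DifferentiableOn ℂ h (closedBall (0:ℂ) r))
    (hM : ∀ z ∈ sphere (0:ℂ) r, ‖h z‖ ≤ M) (k : ℕ) :
    ‖coeff h k‖ ≤ M / r ^ k := by
  have hM0 : 0 ≤ M := le_trans (norm_nonneg _) (hM (r : ℂ) (by simp [abs_of_pos hr]))
  lift r to NNReal using hr.le with r' hr'
  rw [coeff_eq_cauchy (by exact_mod_cast hr) hd k]
  have h2 : ‖cauchyPowerSeries h 0 r' k (fun _ => 1)‖ ≤ ‖cauchyPowerSeries h 0 r' k‖ := by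
    simpa using (cauchyPowerSeries h 0 r' k).le_opNorm (fun _ => 1)
  refine h2.trans ((norm_cauchyPowerSeries_le h 0 r' k).trans ?_)
  have hmem : ∀ θ : ℝ, circleMap 0 r' θ ∈ sphere (0:ℂ) r' := fun θ =>
    circleMap_mem_sphere (0:ℂ) r'.coe_nonneg θ
  have hcont : ContinuousOn (fun θ : ℝ => ‖h (circleMap 0 r' θ)‖) (Set.uIcc 0 (2 * Real.pi)) := by
    apply ContinuousOn.norm
    exact hd.continuousOn.comp (continuous_circleMap 0 r').continuousOn
      (fun θ _ => sphere_subset_closedBall (hmem θ))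
  have hint : (∫ θ : ℝ in (0)..2 * Real.pi, ‖h (circleMap 0 r' θ)‖) ≤ 2 * Real.pi * M := by
    have := intervalIntegral.integral_mono_on Real.two_pi_pos.le
      (hcont.intervalIntegrable) (intervalIntegrable_const (μ := MeasureTheory.volume) (c := M))
      (fun θ _ => hM _ (hmem θ))
    simpa [mul_comm] using this
  have hpos : (0:ℝ) < 2 * Real.pi := Real.two_pi_pos
  calc ((2 * Real.pi)⁻¹ * ∫ θ : ℝ in (0)..2 * Real.pi, ‖h (circleMap 0 r' θ)‖) * |(r':ℝ)|⁻¹ ^ k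
      ≤ ((2 * Real.pi)⁻¹ * (2 * Real.pi * M)) * |(r':ℝ)|⁻¹ ^ k := by
        gcongr
    _ = M / (r':ℝ) ^ k := by
        rw [inv_mul_cancel_left₀ hpos.ne', abs_of_pos (by exact_mod_cast hr)]
        rw [div_eq_mul_inv, inv_pow]

lemma coeff_sub {f g : ℂ → ℂ} {R : ℝ} (hR : 0 < R)
    (hf : AnalyticOnNhd ℂ f (ball (0:ℂ) R)) (hg : AnalyticOnNhd ℂ g (ball (0:ℂ) R)) (k : ℕ) :
    coeff (fun z => f z - g z) k = coeff f k - coeff g k := by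
  have hs : IsOpen (ball (0:ℂ) R) := isOpen_ball
  have h0 : (0:ℂ) ∈ ball (0:ℂ) R := by simp [hR]
  have key : ∀ h : ℂ → ℂ, iteratedDeriv k h 0 = iteratedDerivWithin k h (ball (0:ℂ) R) 0 := by
    intro h
    rw [iteratedDeriv_eq_iteratedFDeriv, iteratedDerivWithin_eq_iteratedFDerivWithin,
      iteratedFDerivWithin_of_isOpen (f := h) k hs h0]
  have hfc : ContDiffOn ℂ k f (ball (0:ℂ) R) := hf.analyticOn.contDiffOn hs.uniqueDiffOn
  have hgc : ContDiffOn ℂ k g (ball (0:ℂ) R) := hg.analyticOn.contDiffOn hs.uniqueDiffOn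
  unfold coeff
  rw [key (fun z => f z - g z), key f, key g,
    show (fun z => f z - g z) = f - g from rfl,
    iteratedDerivWithin_sub h0 hs.uniqueDiffOn (hfc 0 h0) (hgc 0 h0), sub_div]

lemma summable_aux {a b : ℕ → ℂ} {C₁ C₂ r₁ r₂ : ℝ} (hr₁ : 0 < r₁) (hr₂ : 0 < r₂)
    (h₁ : ∀ k, ‖a k‖ ≤ C₁ / r₁ ^ k) (h₂ : ∀ k, ‖b k‖ ≤ C₂ / r₂ ^ k) {z : ℂ}
    (hz : ‖z‖ < r₁ * r₂) : Summable (fun k => a k * b k * z ^ k) := by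
  have hC₁ : 0 ≤ C₁ := by have := (norm_nonneg (a 0)).trans (h₁ 0); simpa using this
  have hC₂ : 0 ≤ C₂ := by have := (norm_nonneg (b 0)).trans (h₂ 0); simpa using this
  set q : ℝ := ‖z‖ / (r₁ * r₂) with hq
  have hq0 : 0 ≤ q := by positivity
  have hq1 : q < 1 := (div_lt_one (by positivity)).mpr hz
  apply Summable.of_norm_bounded (g := fun k => C₁ * C₂ * q ^ k)
    ((summable_geometric_of_lt_one hq0 hq1).mul_left _)
  intro k
  have : ‖a k * b k * z ^ k‖ ≤ (C₁ / r₁ ^ k) * (C₂ / r₂ ^ k) * ‖z‖ ^ k := by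
    rw [norm_mul, norm_mul, norm_pow]
    gcongr
    exacts [h₁ k, h₂ k]
  refine this.trans (le_of_eq ?_)
  rw [hq, div_pow, mul_pow]
  field_simp

theorem stmt0 (R₁ R₂ : ℝ) (hR₁ : 0 < R₁) (hR₂ : 0 < R₂)
    (f g : ℂ → ℂ) (fn gn : ℕ → ℂ → ℂ)
    (hfn : ∀ n, AnalyticOnNhd ℂ (fn n) (ball (0:ℂ) R₁))
    (hf : AnalyticOnNhd ℂ f (ball (0:ℂ) R₁))
    (hgn : ∀ n, AnalyticOnNhd ℂ (gn n) (ball (0:ℂ) R₂))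
    (hg : AnalyticOnNhd ℂ g (ball (0:ℂ) R₂))
    (hcf : TendstoLocallyUniformlyOn fn f atTop (ball (0:ℂ) R₁))
    (hcg : TendstoLocallyUniformlyOn gn g atTop (ball (0:ℂ) R₂)) :
    TendstoLocallyUniformlyOn (fun n => hadamard (fn n) (gn n)) (hadamard f g)
      atTop (ball (0:ℂ) (R₁ * R₂)) := by
  rw [tendstoLocallyUniformlyOn_iff_forall_isCompact isOpen_ball]
  intro K hK hKc
  rcases K.eq_empty_or_nonempty with rfl | hne
  · exact tendstoUniformlyOn_empty
  obtain ⟨z₀, hz₀K, hz₀'⟩ := hKc.exists_isMaxOn hne continuous_norm.continuousOn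
  have hz₀ : ∀ w ∈ K, ‖w‖ ≤ ‖z₀‖ := fun w hw => hz₀' hw
  set ρ := ‖z₀‖ with hρdef
  have hρ0 : 0 ≤ ρ := norm_nonneg _
  have hRR : 0 < R₁ * R₂ := mul_pos hR₁ hR₂
  have hρlt : ρ < R₁ * R₂ := by simpa [mem_ball_zero_iff] using hK hz₀K
  obtain ⟨t, ht1, ht2⟩ := exists_between hρlt
  have ht0 : 0 < t := lt_of_le_of_lt hρ0 ht1
  obtain ⟨r₁, r₂, hr₁0, hr₂0, hr₁R, hr₂R, hrr⟩ :
      ∃ r₁ r₂ : ℝ, 0 < r₁ ∧ 0 < r₂ ∧ r₁ < R₁ ∧ r₂ < R₂ ∧ r₁ * r₂ = t := by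
    set u : ℝ := Real.sqrt (t / (R₁ * R₂)) with hu
    have hu0 : 0 < u := Real.sqrt_pos.mpr (div_pos ht0 hRR)
    have hu1 : u < 1 := by
      rw [show (1:ℝ) = Real.sqrt 1 by simp, hu]
      exact Real.sqrt_lt_sqrt (by positivity) ((div_lt_one hRR).mpr ht2)
    have huu : u * u = t / (R₁ * R₂) := Real.mul_self_sqrt (by positivity)
    refine ⟨u * R₁, u * R₂, mul_pos hu0 hR₁, mul_pos hu0 hR₂, ?_, ?_, ?_⟩
    · nlinarith
    · nlinarith
    · field_simp at huu
      nlinarith [huu]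
  have hcb₁ : closedBall (0:ℂ) r₁ ⊆ ball (0:ℂ) R₁ := closedBall_subset_ball hr₁R
  have hcb₂ : closedBall (0:ℂ) r₂ ⊆ ball (0:ℂ) R₂ := closedBall_subset_ball hr₂R
  have hUf : TendstoUniformlyOn fn f atTop (closedBall (0:ℂ) r₁) :=
    (tendstoLocallyUniformlyOn_iff_forall_isCompact isOpen_ball).mp hcf _ hcb₁
      (isCompact_closedBall _ _)
  have hUg : TendstoUniformlyOn gn g atTop (closedBall (0:ℂ) r₂) :=
    (tendstoLocallyUniformlyOn_iff_forall_isCompact isOpen_ball).mp hcg _ hcb₂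
      (isCompact_closedBall _ _)
  obtain ⟨M₁, hM₁⟩ := (isCompact_closedBall (0:ℂ) r₁).exists_bound_of_continuousOn
    ((hf.continuousOn).mono hcb₁)
  obtain ⟨M₂, hM₂⟩ := (isCompact_closedBall (0:ℂ) r₂).exists_bound_of_continuousOn
    ((hg.continuousOn).mono hcb₂)
  have hM₁0 : 0 ≤ M₁ := le_trans (norm_nonneg _) (hM₁ 0 (by simp [hr₁0.le]))
  have hM₂0 : 0 ≤ M₂ := le_trans (norm_nonneg _) (hM₂ 0 (by simp [hr₂0.le]))
  rw [Metric.tendstoUniformlyOn_iff]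
  intro ε hε
  set q : ℝ := ρ / t with hqdef
  have hq0 : 0 ≤ q := by positivity
  have hq1 : q < 1 := (div_lt_one ht0).mpr ht1
  have h1q : 0 < 1 - q := by linarith
  set δ : ℝ := min 1 (ε * (1 - q) / (2 * (M₁ + M₂ + 2))) with hδdef
  have hδ0 : 0 < δ := lt_min one_pos (by positivity)
  have hδ1 : δ ≤ 1 := min_le_left _ _
  filter_upwards [Metric.tendstoUniformlyOn_iff.mp hUf δ hδ0,
    Metric.tendstoUniformlyOn_iff.mp hUg δ hδ0] with n hn₁ hn₂
  intro z hzK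
  have hzρ : ‖z‖ ≤ ρ := hz₀ z hzK
  -- coefficient bounds
  have hfd : DifferentiableOn ℂ (fn n) (closedBall (0:ℂ) r₁) :=
    ((hfn n).mono hcb₁).differentiableOn
  have hgd : DifferentiableOn ℂ (gn n) (closedBall (0:ℂ) r₂) :=
    ((hgn n).mono hcb₂).differentiableOn
  have hfd' : DifferentiableOn ℂ f (closedBall (0:ℂ) r₁) := (hf.mono hcb₁).differentiableOn
  have hgd' : DifferentiableOn ℂ g (closedBall (0:ℂ) r₂) := (hg.mono hcb₂).differentiableOn
  have hA : ∀ k, ‖coeff f k - coeff (fn n) k‖ ≤ δ / r₁ ^ k := by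
    intro k
    rw [← coeff_sub hR₁ hf (hfn n) k]
    exact coeff_bound hr₁0 (hfd'.sub hfd)
      (fun w hw => by
        have := hn₁ w (sphere_subset_closedBall hw)
        rw [dist_eq_norm] at this
        exact this.le) k
  have hB : ∀ k, ‖coeff g k - coeff (gn n) k‖ ≤ δ / r₂ ^ k := by
    intro k
    rw [← coeff_sub hR₂ hg (hgn n) k]
    exact coeff_bound hr₂0 (hgd'.sub hgd)
      (fun w hw => by
        have := hn₂ w (sphere_subset_closedBall hw)
        rw [dist_eq_norm] at this
        exact this.le) k
  have hCf : ∀ k, ‖coeff f k‖ ≤ M₁ / r₁ ^ k := fun k =>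
    coeff_bound hr₁0 hfd' (fun w hw => hM₁ w (sphere_subset_closedBall hw)) k
  have hCg : ∀ k, ‖coeff g k‖ ≤ M₂ / r₂ ^ k := fun k =>
    coeff_bound hr₂0 hgd' (fun w hw => hM₂ w (sphere_subset_closedBall hw)) k
  have hCfn : ∀ k, ‖coeff (fn n) k‖ ≤ (M₁ + δ) / r₁ ^ k := fun k =>
    coeff_bound hr₁0 hfd
      (fun w hw => by
        have h1 := hn₁ w (sphere_subset_closedBall hw)
        rw [dist_eq_norm] at h1
        have h2 := hM₁ w (sphere_subset_closedBall hw)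
        calc ‖fn n w‖ = ‖f w - (f w - fn n w)‖ := by ring_nf
          _ ≤ ‖f w‖ + ‖f w - fn n w‖ := norm_sub_le _ _
          _ ≤ M₁ + δ := add_le_add h2 h1.le) k
  have hCgn : ∀ k, ‖coeff (gn n) k‖ ≤ (M₂ + δ) / r₂ ^ k := fun k =>
    coeff_bound hr₂0 hgd
      (fun w hw => by
        have h1 := hn₂ w (sphere_subset_closedBall hw)
        rw [dist_eq_norm] at h1
        have h2 := hM₂ w (sphere_subset_closedBall hw)
        calc ‖gn n w‖ = ‖g w - (g w - gn n w)‖ := by ring_nf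
          _ ≤ ‖g w‖ + ‖g w - gn n w‖ := norm_sub_le _ _
          _ ≤ M₂ + δ := add_le_add h2 h1.le) k
  have hzt : ‖z‖ < r₁ * r₂ := by rw [hrr]; exact lt_of_le_of_lt hzρ ht1
  have S1 : Summable (fun k => coeff f k * coeff g k * z ^ k) :=
    summable_aux hr₁0 hr₂0 hCf hCg hzt
  have S2 : Summable (fun k => coeff (fn n) k * coeff (gn n) k * z ^ k) :=
    summable_aux hr₁0 hr₂0 hCfn hCgn hzt
  set c : ℕ → ℂ := fun k =>
    coeff f k * coeff g k * z ^ k - coeff (fn n) k * coeff (gn n) k * z ^ k with hcdef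
  set C : ℝ := δ * (M₁ + M₂ + 2) with hCdef
  have hterm : ∀ k, ‖c k‖ ≤ C * q ^ k := by
    intro k
    have e : c k = ((coeff f k - coeff (fn n) k) * coeff g k
        + coeff (fn n) k * (coeff g k - coeff (gn n) k)) * z ^ k := by
      rw [hcdef]; ring
    have hnz : ‖z ^ k‖ ≤ ρ ^ k := by
      rw [norm_pow]; exact pow_le_pow_left₀ (norm_nonneg _) hzρ k
    calc ‖c k‖ ≤ (‖coeff f k - coeff (fn n) k‖ * ‖coeff g k‖
          + ‖coeff (fn n) k‖ * ‖coeff g k - coeff (gn n) k‖) * ‖z ^ k‖ := by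
          rw [e, norm_mul]
          gcongr
          exact (norm_add_le _ _).trans (by rw [norm_mul, norm_mul])
      _ ≤ (δ / r₁ ^ k * (M₂ / r₂ ^ k) + (M₁ + δ) / r₁ ^ k * (δ / r₂ ^ k)) * ρ ^ k := by
          gcongr <;> first
            | exact hA k | exact hCg k | exact hCfn k | exact hB k | exact hnz
      _ = (δ * M₂ + (M₁ + δ) * δ) * q ^ k := by
          have e1 : (r₁:ℝ) ^ k ≠ 0 := by positivity
          have e2 : (r₂:ℝ) ^ k ≠ 0 := by positivity
          rw [hqdef, ← hrr, div_pow, mul_pow]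
          field_simp
      _ ≤ C * q ^ k := by
          rw [hCdef]
          gcongr
          nlinarith
  have S3 : Summable (fun k : ℕ => C * q ^ k) :=
    (summable_geometric_of_lt_one hq0 hq1).mul_left _
  have Snorm : Summable (fun k => ‖c k‖) :=
    Summable.of_nonneg_of_le (fun k => norm_nonneg _) hterm S3
  have hdist : dist (hadamard f g z) (hadamard (fn n) (gn n) z) = ‖∑' k, c k‖ := by
    rw [dist_eq_norm, hadamard, hadamard]
    congr 1
    exact (S1.tsum_sub S2).symm
  rw [hdist]
  calc ‖∑' k, c k‖ ≤ ∑' k, ‖c k‖ := norm_tsum_le_tsum_norm Snorm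
    _ ≤ ∑' k : ℕ, C * q ^ k := Snorm.tsum_le_tsum hterm S3
    _ = C * (1 - q)⁻¹ := by rw [tsum_mul_left, tsum_geometric_of_lt_one hq0 hq1]
    _ ≤ (ε * (1 - q) / 2) * (1 - q)⁻¹ := by
      have hδ2 : δ ≤ ε * (1 - q) / (2 * (M₁ + M₂ + 2)) := min_le_right _ _
      have hM : (0:ℝ) < M₁ + M₂ + 2 := by linarith
      have h3 : C ≤ ε * (1 - q) / 2 := by
        rw [hCdef]
        calc δ * (M₁ + M₂ + 2) ≤ (ε * (1 - q) / (2 * (M₁ + M₂ + 2))) * (M₁ + M₂ + 2) := by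
              gcongr
          _ = ε * (1 - q) / 2 := by field_simp
      gcongr
    _ = ε / 2 := by field_simp
    _ < ε := by linarith
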